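/- arXiv:1907.01397 — 3 statements merged into one kernel-verified Lean document; each statement's English description precedes it below -/
import Mathlib

section
/- For a degree-$k$ polynomial $p$ on $\mathbb{R}$ and nested intervals $I_0 = [a, a+\delta] \subseteq I = [b, b+H]$ with $\delta > 0$, the $L^2$ norms satisfy $\|p\|_{L^2(I)}^2 \leq C(k) \, (H/\delta)^{2k+1} \, \|p\|_{L^2(I_0)}^2$ for a constant $C(k)$ depending only on $k$. -/
open intervalIntegral

section Stmt2Aux

open Polynomial

/-- The quadratic form `c ↦ ∫₀¹ (∑ cᵢ xⁱ)² dx`. -/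
private noncomputable def F2 (k : ℕ) (c : Fin (k+1) → ℝ) : ℝ :=
  ∫ x in (0:ℝ)..1, (∑ i : Fin (k+1), c i * x ^ (i:ℕ)) ^ 2

private lemma F2_eq (k : ℕ) (c : Fin (k+1) → ℝ) :
    F2 k c = ∑ i : Fin (k+1), ∑ j : Fin (k+1),
      (c i * c j) * (1 / ((i:ℕ) + (j:ℕ) + 1 : ℝ)) := by
  have hpt : ∀ x : ℝ, (∑ i : Fin (k+1), c i * x ^ (i:ℕ))^2
      = ∑ i : Fin (k+1), ∑ j : Fin (k+1), (c i * c j) * x ^ ((i:ℕ)+(j:ℕ)) := by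
    intro x
    rw [sq, Finset.sum_mul_sum]
    refine Finset.sum_congr rfl fun i _ => Finset.sum_congr rfl fun j _ => ?_
    ring
  unfold F2
  simp_rw [hpt]
  rw [intervalIntegral.integral_finset_sum]
  · refine Finset.sum_congr rfl fun i _ => ?_
    rw [intervalIntegral.integral_finset_sum]
    · refine Finset.sum_congr rfl fun j _ => ?_
      rw [intervalIntegral.integral_const_mul, integral_pow]
      push_cast
      norm_num
    · intro j _
      exact ((continuous_const.mul (continuous_pow _)).intervalIntegrable 0 1)
  · intro i _
    apply Continuous.intervalIntegrable
    exact continuous_finset_sum _ fun j _ => continuous_const.mul (continuous_pow _)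

private lemma F2_smul (k : ℕ) (t : ℝ) (c : Fin (k+1) → ℝ) :
    F2 k (t • c) = t^2 * F2 k c := by
  rw [F2_eq, F2_eq, Finset.mul_sum]
  refine Finset.sum_congr rfl fun i _ => ?_
  rw [Finset.mul_sum]
  refine Finset.sum_congr rfl fun j _ => ?_
  simp only [Pi.smul_apply, smul_eq_mul]
  ring

private lemma F2_cont (k : ℕ) : Continuous (F2 k) := by
  have h : F2 k = fun c : Fin (k+1) → ℝ => ∑ i : Fin (k+1), ∑ j : Fin (k+1),
      (c i * c j) * (1 / ((i:ℕ) + (j:ℕ) + 1 : ℝ)) := funext (F2_eq k)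
  rw [h]
  exact continuous_finset_sum _ fun i _ => continuous_finset_sum _ fun j _ =>
    (((continuous_apply i).mul (continuous_apply j)).mul continuous_const)

private lemma F2_pos (k : ℕ) (c : Fin (k+1) → ℝ) (hc : c ≠ 0) : 0 < F2 k c := by
  classical
  set P : Polynomial ℝ := ∑ i : Fin (k+1), C (c i) * X ^ (i:ℕ) with hP
  have hPeval : ∀ x : ℝ, P.eval x = ∑ i : Fin (k+1), c i * x ^ (i:ℕ) := by
    intro x; simp [hP, eval_finset_sum]
  have hPne : P ≠ 0 := by
    obtain ⟨i0, hi0⟩ := Function.ne_iff.mp hc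
    intro h
    apply hi0
    have hco := congrArg (fun r => Polynomial.coeff r (i0:ℕ)) h
    simp only [hP, Polynomial.finset_sum_coeff, Polynomial.coeff_C_mul,
      Polynomial.coeff_X_pow, Polynomial.coeff_zero, mul_ite, mul_one, mul_zero,
      Fin.val_inj, Finset.sum_ite_eq', Finset.mem_univ, if_true] at hco
    simpa using hco
  have hroots : {x : ℝ | P.IsRoot x}.Finite := Polynomial.finite_setOf_isRoot hPne
  have hIoo : (Set.Ioo (0:ℝ) 1).Infinite := Set.Ioo_infinite (by norm_num)
  obtain ⟨x0, hx0I, hx0r⟩ := (hIoo.diff hroots).nonempty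
  have hx0ne : P.eval x0 ≠ 0 := hx0r
  -- pick a small interval around x0 avoiding roots
  have hUopen : IsOpen {x : ℝ | Polynomial.eval x P ≠ 0} := by
    have : {x : ℝ | Polynomial.eval x P ≠ 0}
        = (fun x => Polynomial.eval x P) ⁻¹' {y : ℝ | y ≠ 0} := rfl
    rw [this]
    exact isOpen_ne.preimage P.continuous
  obtain ⟨ε0, hε0, hball⟩ := Metric.isOpen_iff.mp hUopen x0 hx0ne
  set ε : ℝ := min ε0 (min x0 (1 - x0)) with hεdef
  have hε : 0 < ε := by
    have h1 : 0 < x0 := hx0I.1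
    have h2 : x0 < 1 := hx0I.2
    simp only [hεdef, lt_min_iff]
    exact ⟨hε0, h1, by linarith⟩
  set u : ℝ := x0 - ε with hu
  set v : ℝ := x0 + ε with hv
  have hεle : ε ≤ ε0 := min_le_left _ _
  have hεx0 : ε ≤ x0 := le_trans (min_le_right _ _) (min_le_left _ _)
  have hεx1 : ε ≤ 1 - x0 := le_trans (min_le_right _ _) (min_le_right _ _)
  have hu0 : 0 ≤ u := by simp only [hu]; linarith
  have hv1 : v ≤ 1 := by simp only [hv]; linarith
  have huv : u < v := by simp only [hu, hv]; linarith
  have hi : ∀ a b : ℝ, IntervalIntegrable (fun x => (Polynomial.eval x P)^2)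
      MeasureTheory.volume a b := fun a b => ((P.continuous.pow 2).intervalIntegrable a b)
  have hmid : 0 < ∫ x in u..v, (Polynomial.eval x P)^2 := by
    apply intervalIntegral_pos_of_pos_on (hi u v) _ huv
    intro x hx
    have hxball : x ∈ Metric.ball x0 ε0 := by
      rw [Real.ball_eq_Ioo]
      exact ⟨by simp only [hu] at hx; linarith [hx.1], by simp only [hv] at hx; linarith [hx.2]⟩
    have : Polynomial.eval x P ≠ 0 := hball hxball
    exact pow_two_pos_of_ne_zero this
  have e1 := intervalIntegral.integral_add_adjacent_intervals (hi 0 u) (hi u 1)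
  have e2 := intervalIntegral.integral_add_adjacent_intervals (hi u v) (hi v 1)
  have n1 : 0 ≤ ∫ x in (0:ℝ)..u, (Polynomial.eval x P)^2 :=
    intervalIntegral.integral_nonneg hu0 (fun x _ => sq_nonneg _)
  have n2 : 0 ≤ ∫ x in v..1, (Polynomial.eval x P)^2 :=
    intervalIntegral.integral_nonneg hv1 (fun x _ => sq_nonneg _)
  have hF : F2 k c = ∫ x in (0:ℝ)..1, (Polynomial.eval x P)^2 := by
    unfold F2
    refine intervalIntegral.integral_congr fun x _ => ?_
    rw [hPeval x]
  rw [hF]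
  linarith

private lemma F2_bound (k : ℕ) :
    ∃ m : ℝ, 0 < m ∧ ∀ c : Fin (k+1) → ℝ, ∀ i, (c i)^2 ≤ F2 k c / m := by
  have hsne : (Metric.sphere (0 : Fin (k+1) → ℝ) 1).Nonempty :=
    NormedSpace.sphere_nonempty.mpr zero_le_one
  obtain ⟨c0, hc0s, hmin'⟩ := (isCompact_sphere (0 : Fin (k+1) → ℝ) 1).exists_isMinOn
    hsne (F2_cont k).continuousOn
  have hmin : ∀ c ∈ Metric.sphere (0 : Fin (k+1) → ℝ) 1, F2 k c0 ≤ F2 k c :=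
    fun c hc => hmin' hc
  have hc0 : ‖c0‖ = 1 := mem_sphere_zero_iff_norm.mp hc0s
  have hc0ne : c0 ≠ 0 := by
    intro h; rw [h, norm_zero] at hc0; norm_num at hc0
  have hm : 0 < F2 k c0 := F2_pos k c0 hc0ne
  refine ⟨F2 k c0, hm, ?_⟩
  intro c i
  rcases eq_or_ne c 0 with rfl | hc
  · have h0 : F2 k (0 : Fin (k+1) → ℝ) = 0 := by unfold F2; simp
    simp [h0]
  · have hn : ‖c‖ ≠ 0 := norm_ne_zero_iff.mpr hc
    have hcs : (‖c‖⁻¹ • c) ∈ Metric.sphere (0 : Fin (k+1) → ℝ) 1 := by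
      rw [mem_sphere_zero_iff_norm, norm_smul, norm_inv, norm_norm,
        inv_mul_cancel₀ hn]
    have h1 := hmin _ hcs
    have h2 : F2 k c = ‖c‖^2 * F2 k (‖c‖⁻¹ • c) := by
      rw [← F2_smul, smul_smul, mul_inv_cancel₀ hn, one_smul]
    have h3 : (c i)^2 ≤ ‖c‖^2 := by
      have hle := norm_le_pi_norm c i
      have : (c i)^2 = ‖c i‖^2 := by rw [Real.norm_eq_abs, sq_abs]
      rw [this]
      exact pow_le_pow_left₀ (norm_nonneg _) hle 2
    rw [le_div_iff₀ hm]
    calc (c i)^2 * F2 k c0 ≤ ‖c‖^2 * F2 k c0 :=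
          mul_le_mul_of_nonneg_right h3 hm.le
      _ ≤ ‖c‖^2 * F2 k (‖c‖⁻¹ • c) := mul_le_mul_of_nonneg_left h1 (sq_nonneg _)
      _ = F2 k c := h2.symm

private lemma stmt2_normalized (k : ℕ) :
    ∃ C : ℝ, 0 < C ∧ ∀ q : Polynomial ℝ, q.natDegree ≤ k →
      ∀ s R : ℝ, s ≤ 0 → 1 ≤ s + R →
        (∫ x in s..(s+R), (q.eval x)^2)
          ≤ C * R^(2*k+1) * ∫ x in (0:ℝ)..1, (q.eval x)^2 := by
  obtain ⟨m, hm, hb⟩ := F2_bound k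
  refine ⟨((k:ℝ)+1)^2 / m, by positivity, ?_⟩
  intro q hq s R hs hsR
  have hR1 : (1:ℝ) ≤ R := by linarith
  have hR0 : (0:ℝ) < R := by linarith
  set c : Fin (k+1) → ℝ := fun i => q.coeff i with hcdef
  have hev : ∀ x : ℝ, q.eval x = ∑ i : Fin (k+1), c i * x ^ (i:ℕ) := by
    intro x
    rw [Polynomial.eval_eq_sum_range' (Nat.lt_succ_of_le hq) x,
      ← Fin.sum_univ_eq_sum_range]
  have hF : F2 k c = ∫ x in (0:ℝ)..1, (q.eval x)^2 := by
    unfold F2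
    refine intervalIntegral.integral_congr fun x _ => ?_
    rw [hev x]
  have hF0 : 0 ≤ F2 k c := by
    rw [hF]
    exact intervalIntegral.integral_nonneg zero_le_one (fun x _ => sq_nonneg _)
  set K : ℝ := ((k:ℝ)+1)^2 / m * R^(2*k) * F2 k c with hKdef
  have key : ∀ x ∈ Set.Icc s (s+R), (q.eval x)^2 ≤ K := by
    intro x hx
    have hxabs : |x| ≤ R := by
      rw [abs_le]
      constructor
      · linarith [hx.1]
      · linarith [hx.2]
    have hterm : ∀ i : Fin (k+1), (c i * x ^ (i:ℕ))^2 ≤ (F2 k c / m) * R^(2*k) := by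
      intro i
      have h1 : (c i)^2 ≤ F2 k c / m := hb c i
      have h2 : (x ^ (i:ℕ))^2 ≤ R^(2*k) := by
        have e : (x ^ (i:ℕ))^2 = |x| ^ (2 * (i:ℕ)) := by
          rw [← pow_mul, mul_comm (i:ℕ) 2, (even_two_mul (i:ℕ)).pow_abs]
        rw [e]
        calc |x| ^ (2 * (i:ℕ)) ≤ R ^ (2 * (i:ℕ)) :=
              pow_le_pow_left₀ (abs_nonneg x) hxabs _
          _ ≤ R ^ (2*k) := pow_le_pow_right₀ hR1 (by omega)
      calc (c i * x ^ (i:ℕ))^2 = (c i)^2 * (x ^ (i:ℕ))^2 := by ring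
        _ ≤ (F2 k c / m) * R^(2*k) := by
            apply mul_le_mul h1 h2 (sq_nonneg _)
            positivity
    have hsum : ∑ i : Fin (k+1), (c i * x ^ (i:ℕ))^2
        ≤ ((k:ℝ)+1) * ((F2 k c / m) * R^(2*k)) := by
      calc ∑ i : Fin (k+1), (c i * x ^ (i:ℕ))^2
          ≤ ∑ _i : Fin (k+1), (F2 k c / m) * R^(2*k) :=
            Finset.sum_le_sum (fun i _ => hterm i)
        _ = ((k:ℝ)+1) * ((F2 k c / m) * R^(2*k)) := by
            rw [Finset.sum_const, Finset.card_univ, Fintype.card_fin, nsmul_eq_mul]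
            push_cast
            ring
    rw [hev x]
    calc (∑ i : Fin (k+1), c i * x ^ (i:ℕ))^2
        ≤ ((Finset.univ : Finset (Fin (k+1))).card : ℝ)
            * ∑ i : Fin (k+1), (c i * x ^ (i:ℕ))^2 := sq_sum_le_card_mul_sum_sq
      _ = ((k:ℝ)+1) * ∑ i : Fin (k+1), (c i * x ^ (i:ℕ))^2 := by
          rw [Finset.card_univ, Fintype.card_fin]; push_cast; ring
      _ ≤ ((k:ℝ)+1) * (((k:ℝ)+1) * ((F2 k c / m) * R^(2*k))) :=
          mul_le_mul_of_nonneg_left hsum (by positivity)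
      _ = K := by
          rw [hKdef]
          field_simp
  have hmono : (∫ x in s..(s+R), (q.eval x)^2) ≤ ∫ _x in s..(s+R), K :=
    intervalIntegral.integral_mono_on (by linarith)
      ((q.continuous.pow 2).intervalIntegrable s (s+R))
      (intervalIntegrable_const) key
  have hconst : (∫ _x in s..(s+R), K) = R * K := by
    rw [intervalIntegral.integral_const, smul_eq_mul, add_sub_cancel_left]
  rw [hconst] at hmono
  calc (∫ x in s..(s+R), (q.eval x)^2) ≤ R * K := hmono
    _ = ((k:ℝ)+1)^2 / m * R^(2*k+1) * F2 k c := by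
        rw [hKdef, pow_succ]
        ring
    _ = ((k:ℝ)+1)^2 / m * R^(2*k+1) * ∫ x in (0:ℝ)..1, (q.eval x)^2 := by rw [hF]

end Stmt2Aux

/-- One-dimensional polynomial norm comparison: for every `k` there is a constant `C(k)`
such that for every polynomial `p` of degree at most `k` and nested intervals
`[a, a+δ] ⊆ [b, b+H]` with `δ > 0`, one has
`‖p‖²_{L²([b,b+H])} ≤ C(k) (H/δ)^{2k+1} ‖p‖²_{L²([a,a+δ])}`. -/
theorem stmt2 (k : ℕ) :
    ∃ C : ℝ, 0 < C ∧ ∀ (p : Polynomial ℝ), p.natDegree ≤ k →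
      ∀ a b δ H : ℝ, 0 < δ → Set.Icc a (a + δ) ⊆ Set.Icc b (b + H) →
        (∫ x in b..(b + H), (p.eval x) ^ 2)
          ≤ C * (H / δ) ^ (2 * k + 1) * ∫ x in a..(a + δ), (p.eval x) ^ 2 := by
  obtain ⟨C, hC, hmain⟩ := stmt2_normalized k
  refine ⟨C, hC, ?_⟩
  intro p hp a b δ H hδ hsub
  obtain ⟨hba, haH⟩ := (Set.Icc_subset_Icc_iff (by linarith)).mp hsub
  set q : Polynomial ℝ := p.comp (Polynomial.C δ * Polynomial.X + Polynomial.C a)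
    with hqdef
  have hqdeg : q.natDegree ≤ k := by
    rw [hqdef, Polynomial.natDegree_comp, Polynomial.natDegree_linear hδ.ne']
    simpa using hp
  have hqev : ∀ t : ℝ, q.eval t = p.eval (δ * t + a) := by
    intro t
    simp [hqdef, Polynomial.eval_comp]
  set s : ℝ := (b - a)/δ with hsdef
  set R : ℝ := H/δ with hRdef
  have hs : s ≤ 0 := by
    rw [hsdef]
    exact div_nonpos_iff.mpr (Or.inr ⟨by linarith, hδ.le⟩)
  have hsR : 1 ≤ s + R := by
    rw [hsdef, hRdef, ← add_div, le_div_iff₀ hδ]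
    linarith
  have h1 : (∫ t in s..(s+R), (q.eval t)^2)
      = δ⁻¹ * ∫ x in b..(b+H), (p.eval x)^2 := by
    simp_rw [hqev]
    rw [intervalIntegral.integral_comp_mul_add (fun x => (p.eval x)^2) hδ.ne' a]
    have e1 : δ * s + a = b := by
      rw [hsdef]; field_simp; ring
    have e2 : δ * (s + R) + a = b + H := by
      rw [hsdef, hRdef]; field_simp; ring
    rw [e1, e2, smul_eq_mul]
  have h2 : (∫ t in (0:ℝ)..1, (q.eval t)^2)
      = δ⁻¹ * ∫ x in a..(a+δ), (p.eval x)^2 := by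
    simp_rw [hqev]
    rw [intervalIntegral.integral_comp_mul_add (fun x => (p.eval x)^2) hδ.ne' a]
    have e1 : δ * (0:ℝ) + a = a := by ring
    have e2 : δ * (1:ℝ) + a = a + δ := by ring
    rw [e1, e2, smul_eq_mul]
  have hkey := hmain q hqdeg s R hs hsR
  rw [h1, h2] at hkey
  have hmul := mul_le_mul_of_nonneg_left hkey hδ.le
  calc (∫ x in b..(b+H), (p.eval x)^2)
      = δ * (δ⁻¹ * ∫ x in b..(b+H), (p.eval x)^2) := by
        rw [← mul_assoc, mul_inv_cancel₀ hδ.ne', one_mul]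
    _ ≤ δ * (C * R^(2*k+1) * (δ⁻¹ * ∫ x in a..(a+δ), (p.eval x)^2)) := hmul
    _ = C * (H/δ)^(2*k+1) * ∫ x in a..(a+δ), (p.eval x)^2 := by
        rw [hRdef]
        field_simp
end

section
/- Let $e = [0, h_e] \times \{0\}$ be an edge of a convex polygon $T \subset \mathbb{R}^2$, and let $\lambda \in P_1(\mathbb{R}^2)$ be the affine function vanishing on a line $\ell$ making angle $\pi - \alpha$ with $e$ (with $0 < \alpha_0 \leq \alpha \leq \pi - \alpha_0$) and normalized so that $\lambda = 1$ at the barycenter (midpoint) of $e$. If $h_e \geq h_T/4$, where $h_T = \mathrm{diam}(T)$, then $\max_{x \in T} \lambda(x) \leq 8/\sin \alpha_0$. -/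
/-- The edge `e = [0,hₑ]×{0}` of a convex polygon `T` has its vertex at the origin,
where a neighboring edge meets it at interior angle `π - α`; the affine function
`λ(x,y) = 2(x sin α + y cos α)/(hₑ sin α)` vanishes on the line of the neighboring edge
and equals `1` at the midpoint of `e`.  If every point of `T` is within distance
`h_T ≤ 4 hₑ` of the vertex and `sin α ≥ sin α₀ > 0`, then `λ ≤ 8 / sin α₀` on `T`. -/
theorem stmt3 (T : Set (ℝ × ℝ)) (he hT α α₀ : ℝ)
    (hconv : Convex ℝ T) (h0 : ((0 : ℝ), (0 : ℝ)) ∈ T)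
    (hdiam : ∀ p ∈ T, Real.sqrt (p.1 ^ 2 + p.2 ^ 2) ≤ hT)
    (hsin0 : 0 < Real.sin α₀) (hsin : Real.sin α₀ ≤ Real.sin α)
    (hhe : 0 < he) (hle : hT / 4 ≤ he) :
    ∀ p ∈ T, 2 * (p.1 * Real.sin α + p.2 * Real.cos α) / (he * Real.sin α)
      ≤ 8 / Real.sin α₀ := by
  intro p hp
  have hsα : 0 < Real.sin α := lt_of_lt_of_le hsin0 hsin
  have hsq : Real.sqrt (p.1 ^ 2 + p.2 ^ 2) ^ 2 = p.1 ^ 2 + p.2 ^ 2 :=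
    Real.sq_sqrt (by positivity)
  have hsn : (0:ℝ) ≤ Real.sqrt (p.1 ^ 2 + p.2 ^ 2) := Real.sqrt_nonneg _
  have hpyth : Real.sin α ^ 2 + Real.cos α ^ 2 = 1 := Real.sin_sq_add_cos_sq α
  have hA : p.1 * Real.sin α + p.2 * Real.cos α ≤ Real.sqrt (p.1 ^ 2 + p.2 ^ 2) := by
    nlinarith [sq_nonneg (p.1 * Real.cos α - p.2 * Real.sin α),
      sq_nonneg (p.1 * Real.sin α + p.2 * Real.cos α - Real.sqrt (p.1 ^ 2 + p.2 ^ 2))]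
  have hA4 : p.1 * Real.sin α + p.2 * Real.cos α ≤ 4 * he :=
    hA.trans ((hdiam p hp).trans (by linarith))
  rw [div_le_div_iff₀ (by positivity) hsin0]
  nlinarith [mul_pos hhe hsin0, mul_le_mul_of_nonneg_left hsin (le_of_lt hhe)]
end

section
/- Let $T_0 = [a, a+\delta] \times [0, \delta] \subset \mathbb{R}^2$ be a square of side $\delta$ whose bottom side lies in the interior of an edge $e$ of a convex polygon $T$, with $\delta = h_e/16$ and $e$ of length $h_e$, the bottom side of $T_0$ centered at the midpoint of $e$. Let $\lambda \in P_1(\mathbb{R}^2)$ vanish on a neighboring edge $e_i$ of $e$ meeting $e$ at interior angle $\pi - \alpha_i$ with $\alpha_i \leq \pi/2$, normalized so $\lambda = 1$ at the midpoint of $e$. Then $\lambda \geq 15/16$ on $T_0$. -/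
/-- Lower bound for the hat function on the interior square `T₀`:  the edge
`e = [0,hₑ]×{0}` meets its neighboring edge `eᵢ` at the origin with interior angle
`π - αᵢ`, `0 < αᵢ ≤ π/2`; the affine function
`λ(x,y) = 2(x sin αᵢ + y cos αᵢ)/(hₑ sin αᵢ)` vanishes on the line of `eᵢ` and equals `1`
at the midpoint of `e`.  On the square `T₀` of side `δ = hₑ/16` sitting on the middle of
`e`, one has `λ ≥ 15/16`. -/
theorem stmt16 (he α : ℝ) (hhe : 0 < he) (hα : 0 < α) (hα2 : α ≤ Real.pi / 2) :
    ∀ x y : ℝ,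
      he / 2 - (he / 16) / 2 ≤ x → x ≤ he / 2 + (he / 16) / 2 →
      0 ≤ y → y ≤ he / 16 →
      (15 : ℝ) / 16 ≤ 2 * (x * Real.sin α + y * Real.cos α) / (he * Real.sin α) := by
  intro x y hx1 hx2 hy1 hy2
  have hs : 0 < Real.sin α :=
    Real.sin_pos_of_pos_of_lt_pi hα (lt_of_le_of_lt hα2 (by linarith [Real.pi_pos]))
  have hc : 0 ≤ Real.cos α := Real.cos_nonneg_of_mem_Icc ⟨by linarith [Real.pi_pos], hα2⟩
  have hden : 0 < he * Real.sin α := mul_pos hhe hs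
  rw [le_div_iff₀ hden]
  have h1 : 15 * he / 32 ≤ x := by linarith
  nlinarith [mul_nonneg hy1 hc, mul_le_mul_of_nonneg_right h1 hs.le]
end
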